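/- With z_0 = 1, g(0) = f(0), z_j = (y_j/a^j)(f(0)−f(j)) and g(j) = f(j)/(f(0)−f(j)) for j ≥ 1, where (y_k) solves the recurrence y_0=1, y_k(f(0)−f(k)) = ∑_{j=0}^{k−1} y_j f(j) a^{k−j}/(k−j)!, the sequence (z_k) satisfies z_k = ∑_{j=0}^{k−1} z_j g(j)/(k−j)! for all k ≥ 1, and consequently z_k = z_0 g(0)·(1/k! + ∑_{h=1}^{k−1} ∑_{1≤i_1<⋯<i_h<k} (1/(i_1!(i_2−i_1)!⋯(k−i_h)!)) ∏_{t=1}^h g(i_t)). -/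

import Mathlib

open Finset

/-- For a chain `1 ≤ i₁ < ⋯ < i_h < k` encoded as the finset
    `S = {i₁, …, i_h} ⊆ (0, k)`, the product of factorials
    `i₁! (i₂ - i₁)! ⋯ (k - i_h)!` of the successive gaps. -/
def gapFactorials (k : ℕ) (S : Finset ℕ) : ℝ :=
  let L : List ℕ := 0 :: (S.sort (· ≤ ·) ++ [k])
  (List.zipWith (fun p n => ((Nat.factorial (n - p) : ℕ) : ℝ)) L L.tail).prod

def pairProd (L : List ℕ) : ℝ :=
  (List.zipWith (fun p n => ((Nat.factorial (n - p) : ℕ) : ℝ)) L L.tail).prod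

lemma gapFactorials_eq (k : ℕ) (S : Finset ℕ) :
    gapFactorials k S = pairProd (0 :: (S.sort (· ≤ ·) ++ [k])) := rfl

lemma gapFactorials_empty (k : ℕ) : gapFactorials k ∅ = (Nat.factorial k : ℕ) := by
  simp [gapFactorials_eq, pairProd]

lemma sort_insert_max (S : Finset ℕ) (j : ℕ) (hS : ∀ i ∈ S, i < j) (hjS : j ∉ S) :
    (insert j S).sort (· ≤ ·) = S.sort (· ≤ ·) ++ [j] := by
  refine List.Perm.eq_of_pairwise' (r := (· ≤ ·)) ?_ ?_ ?_
  rotate_right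
  · rw [← Multiset.coe_eq_coe]
    have h1 : ((insert j S).sort (· ≤ ·) : Multiset ℕ) = (insert j S).val := Finset.sort_eq _ _
    have h2 : ((S.sort (· ≤ ·) ++ [j] : List ℕ) : Multiset ℕ) = S.val + {j} := by
      rw [← Multiset.coe_add, Finset.sort_eq]
      rfl
    rw [h1, h2, Finset.insert_val_of_notMem hjS]
    rw [add_comm, Multiset.singleton_add]
  · exact Finset.pairwise_sort _ _
  · rw [List.pairwise_append]
    refine ⟨Finset.pairwise_sort _ _, List.pairwise_singleton _ _, ?_⟩
    intro a ha b hb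
    rw [List.mem_singleton] at hb
    subst hb
    exact (hS a (Finset.mem_sort (α := ℕ) (· ≤ ·) |>.mp ha)).le
lemma pairProd_cons_cons (a b : ℕ) (t : List ℕ) :
    pairProd (a :: b :: t) = (Nat.factorial (b - a) : ℕ) * pairProd (b :: t) := by
  simp [pairProd]

lemma pairProd_singleton (a : ℕ) : pairProd [a] = 1 := by simp [pairProd]

lemma pairProd_snoc (B : List ℕ) (b c : ℕ) :
    pairProd ((B ++ [b]) ++ [c]) = pairProd (B ++ [b]) * (Nat.factorial (c - b) : ℕ) := by
  induction B with
  | nil => simp [pairProd]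
  | cons a B' ih =>
    cases B' with
    | nil =>
      show pairProd [a, b, c] = pairProd [a, b] * _
      rw [pairProd_cons_cons a b [c], pairProd_cons_cons b c [],
        pairProd_cons_cons a b [], pairProd_singleton, pairProd_singleton]
      ring
    | cons a' B'' =>
      have e1 : ((a :: a' :: B'') ++ [b]) ++ [c] = a :: (((a' :: B'') ++ [b]) ++ [c]) := by simp
      have e2 : (a :: a' :: B'') ++ [b] = a :: ((a' :: B'') ++ [b]) := by simp
      rw [e1, e2]
      have e3 : ((a' :: B'') ++ [b]) ++ [c] = a' :: ((B'' ++ [b]) ++ [c]) := by simp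
      have e4 : (a' :: B'') ++ [b] = a' :: (B'' ++ [b]) := by simp
      rw [e3, e4, pairProd_cons_cons, pairProd_cons_cons, ← e3, ← e4, ih]
      ring

lemma gapFactorials_insert (k j : ℕ) (S : Finset ℕ) (hS : ∀ i ∈ S, i < j) (hjS : j ∉ S) :
    gapFactorials k (insert j S) = gapFactorials j S * (Nat.factorial (k - j) : ℕ) := by
  rw [gapFactorials_eq, gapFactorials_eq, sort_insert_max S j hS hjS]
  have e : (0 : ℕ) :: ((S.sort (· ≤ ·) ++ [j]) ++ [k])
      = ((0 :: S.sort (· ≤ ·)) ++ [j]) ++ [k] := by simp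
  have e2 : (0 : ℕ) :: (S.sort (· ≤ ·) ++ [j]) = (0 :: S.sort (· ≤ ·)) ++ [j] := by simp
  rw [e, pairProd_snoc, ← e2]

lemma powerset_decomp (G : Finset ℕ → ℝ) (U : Finset ℕ) :
    ∑ S ∈ U.powerset, G S
      = G ∅ + ∑ j ∈ U, ∑ S ∈ (U.filter (· < j)).powerset, G (insert j S) := by
  induction U using Finset.induction_on_max with
  | empty => simp
  | insert a s ha ih =>
    have haS : a ∉ s := fun h => lt_irrefl a (ha a h)
    rw [Finset.sum_powerset_insert haS, ih, Finset.sum_insert haS]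
    have h1 : (insert a s).filter (· < a) = s := by
      ext x
      simp only [Finset.mem_filter, Finset.mem_insert]
      constructor
      · rintro ⟨h | h, hlt⟩
        · exact absurd hlt (by omega)
        · exact h
      · exact fun h => ⟨Or.inr h, ha x h⟩
    have h2 : ∀ j ∈ s, (insert a s).filter (· < j) = s.filter (· < j) := by
      intro j hj
      ext x
      simp only [Finset.mem_filter, Finset.mem_insert]
      constructor
      · rintro ⟨h | h, hlt⟩
        · exact absurd hlt (by subst h; exact not_lt.mpr (ha j hj).le)
        · exact ⟨h, hlt⟩
      · exact fun ⟨h, hlt⟩ => ⟨Or.inr h, hlt⟩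
    have h3 : ∑ j ∈ s, ∑ S ∈ ((insert a s).filter (· < j)).powerset, G (insert j S)
        = ∑ j ∈ s, ∑ S ∈ (s.filter (· < j)).powerset, G (insert j S) :=
      Finset.sum_congr rfl (fun j hj => by rw [h2 j hj])
    rw [h1, h3]
    ring
theorem change_of_variables_formula
    (f : ℕ → ℝ) (hf0 : ∀ k, 0 ≤ f k) (hf : ∀ k, 1 ≤ k → f k < f 0)
    (a : ℝ) (ha : 0 < a)
    (y : ℕ → ℝ) (hy0 : y 0 = 1)
    (hy : ∀ k, 1 ≤ k →
      y k * (f 0 - f k) =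
        ∑ j ∈ Finset.range k, y j * f j * a ^ (k - j) / (Nat.factorial (k - j)))
    (g : ℕ → ℝ) (hg0 : g 0 = f 0)
    (hg : ∀ j, 1 ≤ j → g j = f j / (f 0 - f j))
    (z : ℕ → ℝ) (hz0 : z 0 = y 0)
    (hz : ∀ j, 1 ≤ j → z j = y j / a ^ j * (f 0 - f j)) :
    (∀ k, 1 ≤ k →
      z k = ∑ j ∈ Finset.range k, z j * g j / (Nat.factorial (k - j))) ∧
    (∀ k, 1 ≤ k →
      z k = z 0 * g 0 *
        ∑ S ∈ (Finset.Ioo 0 k).powerset,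
          (1 / gapFactorials k S) * ∏ i ∈ S, g i) := by
  have hfne : ∀ j, 1 ≤ j → f 0 - f j ≠ 0 := fun j hj => sub_ne_zero.mpr (hf j hj).ne'
  have ha0 : a ≠ 0 := ha.ne'
  have H1 : ∀ k, 1 ≤ k →
      z k = ∑ j ∈ Finset.range k, z j * g j / (Nat.factorial (k - j)) := by
    intro k hk
    have hzk : z k = (∑ j ∈ Finset.range k,
        y j * f j * a ^ (k - j) / (Nat.factorial (k - j))) / a ^ k := by
      rw [hz k hk, div_mul_eq_mul_div, hy k hk]
    rw [hzk, Finset.sum_div]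
    apply Finset.sum_congr rfl
    intro j hj
    rw [Finset.mem_range] at hj
    have hpow : a ^ k = a ^ j * a ^ (k - j) := by
      rw [← pow_add]; congr 1; omega
    have hfac : ((Nat.factorial (k - j) : ℝ)) ≠ 0 :=
      Nat.cast_ne_zero.mpr (Nat.factorial_ne_zero _)
    have hzg : z j * g j = y j * f j / a ^ j := by
      rcases Nat.eq_zero_or_pos j with h0 | h1
    
      · subst h0; rw [hz0, hy0, hg0]; simp
      · have hc : (f 0 - f j) * (f j / (f 0 - f j)) = f j := by
          field_simp [hfne j h1]
        calc z j * g j = y j / a ^ j * ((f 0 - f j) * (f j / (f 0 - f j))) := by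
              rw [hz j h1, hg j h1]; ring
          _ = y j / a ^ j * f j := by rw [hc]
          _ = y j * f j / a ^ j := by ring
    rw [hzg, hpow]
    have hpj : a ^ j ≠ 0 := pow_ne_zero _ ha0
    have hpkj : a ^ (k - j) ≠ 0 := pow_ne_zero _ ha0
    field_simp
  refine ⟨H1, ?_⟩
  intro k
  induction k using Nat.strong_induction_on with
  | _ k ih =>
    intro hk
    rw [H1 k hk]
    have hsplit : Finset.range k = insert 0 (Finset.Ioo 0 k) := by
      ext x; simp only [Finset.mem_range, Finset.mem_insert, Finset.mem_Ioo]; omega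
    rw [hsplit, Finset.sum_insert (by simp)]
    have hdec : (∑ S ∈ (Finset.Ioo 0 k).powerset, (1 / gapFactorials k S) * ∏ i ∈ S, g i)
        = (1 / gapFactorials k ∅) * ∏ i ∈ (∅ : Finset ℕ), g i
          + ∑ j ∈ Finset.Ioo 0 k, ∑ S ∈ (((Finset.Ioo 0 k).filter (· < j)).powerset),
              (1 / gapFactorials k (insert j S)) * ∏ i ∈ insert j S, g i :=
      powerset_decomp _ _
    have hfilter : ∀ j ∈ Finset.Ioo 0 k,
        (Finset.Ioo 0 k).filter (· < j) = Finset.Ioo 0 j := by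
      intro j hj
      rw [Finset.mem_Ioo] at hj
      ext x
      simp only [Finset.mem_filter, Finset.mem_Ioo]
      omega
    have hinner : ∀ j ∈ Finset.Ioo 0 k,
        (∑ S ∈ (Finset.Ioo 0 j).powerset,
            (1 / gapFactorials k (insert j S)) * ∏ i ∈ insert j S, g i)
        = (∑ S ∈ (Finset.Ioo 0 j).powerset,
            (1 / gapFactorials j S) * ∏ i ∈ S, g i) * g j / (Nat.factorial (k - j)) := by
      intro j hj
      rw [Finset.sum_mul, Finset.sum_div]
      apply Finset.sum_congr rfl
      intro S hS
      rw [Finset.mem_powerset] at hS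
      have hSlt : ∀ i ∈ S, i < j := fun i hi => (Finset.mem_Ioo.mp (hS hi)).2
      have hjS : j ∉ S := fun h => lt_irrefl j (hSlt j h)
      rw [gapFactorials_insert k j S hSlt hjS, Finset.prod_insert hjS]
      rw [one_div, one_div, mul_inv]
      ring
    have hR : ∑ j ∈ Finset.Ioo 0 k, ∑ S ∈ (((Finset.Ioo 0 k).filter (· < j)).powerset),
          (1 / gapFactorials k (insert j S)) * ∏ i ∈ insert j S, g i
        = ∑ j ∈ Finset.Ioo 0 k, (∑ S ∈ (Finset.Ioo 0 j).powerset,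
            (1 / gapFactorials j S) * ∏ i ∈ S, g i) * g j / (Nat.factorial (k - j)) :=
      Finset.sum_congr rfl (fun j hj => by rw [hfilter j hj, hinner j hj])
    have hterm : ∀ j ∈ Finset.Ioo 0 k, z j * g j / (Nat.factorial (k - j))
        = z 0 * g 0 * ((∑ S ∈ (Finset.Ioo 0 j).powerset,
            (1 / gapFactorials j S) * ∏ i ∈ S, g i) * g j / (Nat.factorial (k - j))) := by
      intro j hj
      rw [Finset.mem_Ioo] at hj
      rw [ih j hj.2 hj.1]
      ring
    have hL : ∑ j ∈ Finset.Ioo 0 k, z j * g j / (Nat.factorial (k - j))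
        = ∑ j ∈ Finset.Ioo 0 k, z 0 * g 0 * ((∑ S ∈ (Finset.Ioo 0 j).powerset,
            (1 / gapFactorials j S) * ∏ i ∈ S, g i) * g j / (Nat.factorial (k - j))) :=
      Finset.sum_congr rfl hterm
    rw [hL, hdec, hR, gapFactorials_empty, Finset.prod_empty, mul_add, Finset.mul_sum,
      Nat.sub_zero]
    ring
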